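/- For every finite group G generated by two elements s₁, s₂, there exists a generating set T of G such that Cay(G,T) is the line digraph of an |T|-regular multidigraph (and hence the pattern of a unitary matrix). Concretely, one may take T = s₁·⟨s₁⁻¹s₂⟩, the left coset of the cyclic subgroup generated by s₁⁻¹s₂. -/

import Mathlib

structure Multidigraph (V E : Type*) where
  tail : E → V
  head : E → V

/-- The fiber of the quotient map over any coset has the cardinality of the subgroup. -/
lemma fiber_card {G : Type*} [Group G] (H : Subgroup G) (q : G ⧸ H) :
    Nat.card {g : G // (QuotientGroup.mk g : G ⧸ H) = q} = Nat.card H := by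
  have e1 : {g : G // (QuotientGroup.mk g : G ⧸ H) = q} ≃
      ↑(QuotientGroup.mk ⁻¹' ({q} : Set (G ⧸ H))) :=
    Equiv.subtypeEquiv (Equiv.refl G) (fun a => by simp [Set.mem_preimage])
  have e2 := QuotientGroup.preimageMkEquivSubgroupProdSet H ({q} : Set (G ⧸ H))
  rw [Nat.card_congr (e1.trans e2)]
  simp [Nat.card_prod]

theorem two_generated_cayley_line_digraph {G : Type*} [Group G] [Fintype G]
    (s₁ s₂ : G) (hgen : Subgroup.closure ({s₁, s₂} : Set G) = ⊤) :
    ∃ T : Set G,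
      T = (fun c => s₁ * c) '' (Subgroup.zpowers (s₁⁻¹ * s₂) : Set G) ∧
      Subgroup.closure T = ⊤ ∧
      ∃ (V E : Type) (D : Multidigraph V E),
        (∀ v : V, Nat.card {e : E // D.tail e = v} = Nat.card T ∧
                  Nat.card {e : E // D.head e = v} = Nat.card T) ∧
        ∃ φ : G ≃ E, ∀ g h : G,
          (∃ t ∈ T, h = g * t) ↔ D.head (φ g) = D.tail (φ h) := by
  classical
  set H : Subgroup G := Subgroup.zpowers (s₁⁻¹ * s₂) with hH
  set T : Set G := (fun c => s₁ * c) '' (H : Set G) with hT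
  refine ⟨T, rfl, ?_, ?_⟩
  · -- generation
    rw [eq_top_iff, ← hgen, Subgroup.closure_le]
    have h1 : s₁ ∈ T := ⟨1, H.one_mem, mul_one s₁⟩
    have h2 : s₂ ∈ T := ⟨s₁⁻¹ * s₂, Subgroup.mem_zpowers _, by group⟩
    intro x hx
    simp only [Set.mem_insert_iff, Set.mem_singleton_iff] at hx
    rcases hx with rfl | rfl
    · exact Subgroup.subset_closure h1
    · exact Subgroup.subset_closure h2
  · -- the line digraph structure
    have hTcard : Nat.card T = Nat.card H := by
      rw [hT, Nat.card_image_of_injective (mul_right_injective s₁)]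
      rfl
    set Q := G ⧸ H with hQ
    have eE : G ≃ Fin (Nat.card G) := Finite.equivFin G
    have eV : Q ≃ Fin (Nat.card Q) := Finite.equivFin Q
    refine ⟨Fin (Nat.card Q), Fin (Nat.card G),
      ⟨fun e => eV (QuotientGroup.mk (eE.symm e)),
       fun e => eV (QuotientGroup.mk (eE.symm e * s₁))⟩, ?_, eE, ?_⟩
    · intro v
      constructor
      · -- tail regularity
        have equ : {e : Fin (Nat.card G) //
            eV (QuotientGroup.mk (eE.symm e) : Q) = v} ≃
            {g : G // (QuotientGroup.mk g : Q) = eV.symm v} :=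
          Equiv.subtypeEquiv eE.symm (fun a => by
            constructor
            · intro hv; rw [← hv, Equiv.symm_apply_apply]
            · intro hv; rw [hv, Equiv.apply_symm_apply])
        rw [hTcard, Nat.card_congr equ, fiber_card]
      · -- head regularity
        have equ : {e : Fin (Nat.card G) //
            eV (QuotientGroup.mk (eE.symm e * s₁) : Q) = v} ≃
            {g : G // (QuotientGroup.mk g : Q) = eV.symm v} :=
          Equiv.subtypeEquiv (eE.symm.trans (Equiv.mulRight s₁)) (fun a => by
            simp only [Equiv.trans_apply, Equiv.coe_mulRight]
            constructor
            · intro hv; rw [← hv, Equiv.symm_apply_apply]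
            · intro hv; rw [hv, Equiv.apply_symm_apply])
        rw [hTcard, Nat.card_congr equ, fiber_card]
    · -- adjacency
      intro g h
      simp only [Equiv.symm_apply_apply]
      rw [(eV.injective.eq_iff (a := QuotientGroup.mk (g * s₁))
        (b := QuotientGroup.mk h)), QuotientGroup.eq]
      constructor
      · rintro ⟨t, ⟨c, hc, rfl⟩, rfl⟩
        show (g * s₁)⁻¹ * (g * (s₁ * c)) ∈ H
        have : (g * s₁)⁻¹ * (g * (s₁ * c)) = c := by group
        rw [this]; exact hc
      · intro hmem
        refine ⟨s₁ * ((g * s₁)⁻¹ * h), ⟨(g * s₁)⁻¹ * h, hmem, rfl⟩, ?_⟩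
        group
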